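/- arXiv:1110.5868 — 2 statements merged into one kernel-verified Lean document; each statement's English description precedes it below -/
import Mathlib

section
/- The formal power series identity ∑_{r≥0} B_r(t) s^r = 1/((−1+t)(s − st − st² + st³ + ts² − 1 + 4t − 6t² + 4t³ − t⁴)) holds, where B_r(t) = D_r(t)/(1−t)^{5+2r} and D_r are the Delannoy polynomials. -/
open PowerSeries

/-- The Delannoy polynomials over `ℚ`. -/
noncomputable def delannoyPoly : ℕ → Polynomial ℚ
  | 0 => 1
  | 1 => 1 + Polynomial.X
  | n + 2 => (1 + Polynomial.X) * delannoyPoly (n + 1) + Polynomial.X * delannoyPoly n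

/-- The rational function `t` (the variable of `ℚ(t)`). -/
noncomputable def tvar : RatFunc ℚ := RatFunc.X

/-- `B r = D r / (1-t)^(5+2r)` as a rational function. -/
noncomputable def Bfun (r : ℕ) : RatFunc ℚ :=
  algebraMap (Polynomial ℚ) (RatFunc ℚ) (delannoyPoly r) / (1 - RatFunc.X) ^ (5 + 2 * r)

lemma one_sub_X_ne_zero : (1 - RatFunc.X : RatFunc ℚ) ≠ 0 := by
  intro h
  have hX : (RatFunc.X : RatFunc ℚ) = 1 := by linear_combination -h
  rw [← RatFunc.algebraMap_X, ← map_one (algebraMap (Polynomial ℚ) (RatFunc ℚ))] at hX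
  have := RatFunc.algebraMap_injective ℚ hX
  have h0 : (Polynomial.X : Polynomial ℚ).coeff 0 = (1 : Polynomial ℚ).coeff 0 := by rw [this]
  simp at h0

noncomputable abbrev dmap (r : ℕ) : RatFunc ℚ :=
  algebraMap (Polynomial ℚ) (RatFunc ℚ) (delannoyPoly r)

lemma dmap_zero : dmap 0 = 1 := by simp [dmap, delannoyPoly]

lemma dmap_one : dmap 1 = 1 + RatFunc.X := by
  simp [dmap, delannoyPoly, map_add, RatFunc.algebraMap_X]

lemma dmap_rec (n : ℕ) :
    dmap (n + 2) = (1 + RatFunc.X) * dmap (n + 1) + RatFunc.X * dmap n := by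
  show algebraMap (Polynomial ℚ) (RatFunc ℚ)
      ((1 + Polynomial.X) * delannoyPoly (n + 1) + Polynomial.X * delannoyPoly n) = _
  simp [map_add, map_mul, RatFunc.algebraMap_X, dmap]

/-- The generating function identity
`∑_{r≥0} B_r(t) s^r = 1/((−1+t)(s − st − st² + st³ + ts² − 1 + 4t − 6t² + 4t³ − t⁴))`,
stated as: the product of the power series `∑ B_r s^r` with the denominator equals `1`,
in the ring of formal power series in `s` with coefficients in `ℚ(t)`. -/
theorem Bfun_generating_function :
    (PowerSeries.mk fun r => Bfun r) *
      (PowerSeries.C (-1 + tvar) *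
        (PowerSeries.C (1 - tvar - tvar ^ 2 + tvar ^ 3) * PowerSeries.X +
          PowerSeries.C tvar * PowerSeries.X ^ 2 +
          PowerSeries.C
            (-1 + 4 * tvar - 6 * tvar ^ 2 + 4 * tvar ^ 3 - tvar ^ 4))) = 1 := by
  set t : RatFunc ℚ := RatFunc.X with ht
  have hu : (1 - t) ≠ 0 := one_sub_X_ne_zero
  set a : RatFunc ℚ := (-1 + t) * (1 - t - t ^ 2 + t ^ 3) with ha
  set b : RatFunc ℚ := (-1 + t) * t with hb
  set c : RatFunc ℚ := (-1 + t) * (-1 + 4 * t - 6 * t ^ 2 + 4 * t ^ 3 - t ^ 4) with hc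
  have hC : (PowerSeries.C (-1 + tvar) *
            (PowerSeries.C (1 - tvar - tvar ^ 2 + tvar ^ 3) * PowerSeries.X +
          PowerSeries.C tvar * PowerSeries.X ^ 2 +
          PowerSeries.C
            (-1 + 4 * tvar - 6 * tvar ^ 2 + 4 * tvar ^ 3 - tvar ^ 4)))
      = PowerSeries.C a * PowerSeries.X
        + PowerSeries.C b * PowerSeries.X ^ 2
        + PowerSeries.C c := by
    simp only [ha, hb, hc, map_mul, tvar, ← ht]
    ring
  rw [hC, mul_comm]
  -- coefficient lemmas
  have hB : ∀ r, Bfun r = dmap r / (1 - t) ^ (5 + 2 * r) := fun r => rfl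
  ext n
  rw [PowerSeries.coeff_one]
  match n with
  | 0 =>
    simp only [if_pos rfl, ↓reduceIte]
    have : (PowerSeries.constantCoeff)
        ((PowerSeries.C a * PowerSeries.X
          + PowerSeries.C b * PowerSeries.X ^ 2
          + PowerSeries.C c) * PowerSeries.mk fun r => Bfun r)
        = c * Bfun 0 := by
      simp [map_mul, map_add]
    rw [← PowerSeries.coeff_zero_eq_constantCoeff] at this
    rw [this, hB, dmap_zero, hc]
    field_simp
    ring
  | 1 =>
    simp only [add_mul, map_add, if_neg one_ne_zero]
    have h1 : (PowerSeries.coeff 1)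
        (PowerSeries.C a * PowerSeries.X * PowerSeries.mk fun r => Bfun r)
        = a * Bfun 0 := by
      rw [mul_assoc, PowerSeries.coeff_C_mul]
      have := PowerSeries.coeff_succ_X_mul 0 (PowerSeries.mk fun r => Bfun r)
      rw [this, PowerSeries.coeff_mk]
    have h2 : (PowerSeries.coeff 1)
        (PowerSeries.C b * PowerSeries.X ^ 2 * PowerSeries.mk fun r => Bfun r)
        = 0 := by
      have h := PowerSeries.coeff_succ_X_mul (R := RatFunc ℚ) 0
        (PowerSeries.X * PowerSeries.mk fun r => Bfun r)
      rw [mul_assoc, PowerSeries.coeff_C_mul, sq, mul_assoc PowerSeries.X, h]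
      simp
    have h3 : (PowerSeries.coeff 1)
        (PowerSeries.C c * PowerSeries.mk fun r => Bfun r)
        = c * Bfun 1 := by
      rw [PowerSeries.coeff_C_mul, PowerSeries.coeff_mk]
    rw [h1, h2, h3, hB, hB, dmap_zero, dmap_one, ha, hc, ← ht]
    field_simp
    ring
  | (n + 2) =>
    simp only [add_mul, map_add, if_neg (Nat.succ_ne_zero _)]
    have h1 : (PowerSeries.coeff (n + 2))
        (PowerSeries.C a * PowerSeries.X * PowerSeries.mk fun r => Bfun r)
        = a * Bfun (n + 1) := by
      rw [mul_assoc, PowerSeries.coeff_C_mul, PowerSeries.coeff_succ_X_mul,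
        PowerSeries.coeff_mk]
    have h2 : (PowerSeries.coeff (n + 2))
        (PowerSeries.C b * PowerSeries.X ^ 2 * PowerSeries.mk fun r => Bfun r)
        = b * Bfun n := by
      rw [mul_assoc, PowerSeries.coeff_C_mul,
        PowerSeries.coeff_X_pow_mul (PowerSeries.mk fun r => Bfun r) 2 n,
        PowerSeries.coeff_mk]
    have h3 : (PowerSeries.coeff (n + 2))
        (PowerSeries.C c * PowerSeries.mk fun r => Bfun r)
        = c * Bfun (n + 2) := by
      rw [PowerSeries.coeff_C_mul, PowerSeries.coeff_mk]
    rw [h1, h2, h3, hB, hB, hB, dmap_rec, ha, hb, hc, ← ht]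
    field_simp
    ring
end

section
/- The number of multichains of length k in the 8-element interval [(0),(5)] of the spinor weight poset E (which consists of (0)<(12)<(13), then (13) covered by both (14) and (23), both covered by (24), then (24)<(34)<(5)) equals the coefficient of t^k in (1−t²)/(1−t)^8 = (1+t)/(1−t)^7. -/
/-- The 16 weights of the spinor representation of Spin(10):
`(0)`, `(ij)` for `1 ≤ i < j ≤ 5`, and `(k)` for `1 ≤ k ≤ 5`. -/
inductive SpinE : Type
  | e0 | e12 | e13 | e14 | e15 | e23 | e24 | e25 | e34 | e35 | e45 | e5 | e4 | e3 | e2 | e1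
  deriving DecidableEq

open SpinE

/-- The covering relations of the Hasse diagram of the spinor weight poset `E`. -/
inductive SpinCov : SpinE → SpinE → Prop
  | c1 : SpinCov e0 e12
  | c2 : SpinCov e12 e13
  | c3 : SpinCov e13 e23
  | c4 : SpinCov e13 e14
  | c5 : SpinCov e23 e24
  | c6 : SpinCov e14 e24
  | c7 : SpinCov e14 e15
  | c8 : SpinCov e24 e34
  | c9 : SpinCov e24 e25
  | c10 : SpinCov e15 e25
  | c11 : SpinCov e34 e5
  | c12 : SpinCov e34 e35
  | c13 : SpinCov e25 e35
  | c14 : SpinCov e5 e4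
  | c15 : SpinCov e35 e4
  | c16 : SpinCov e35 e45
  | c17 : SpinCov e4 e3
  | c18 : SpinCov e45 e3
  | c19 : SpinCov e3 e2
  | c20 : SpinCov e2 e1

/-- The partial order on `SpinE` is the reflexive-transitive closure of the
covering relations. -/
instance : Preorder SpinE where
  le := Relation.ReflTransGen SpinCov
  le_refl _ := Relation.ReflTransGen.refl
  le_trans _ _ _ := Relation.ReflTransGen.trans

open SpinE

instance : Fintype SpinE where
  elems := {e0, e12, e13, e14, e15, e23, e24, e25, e34, e35, e45, e5, e4, e3, e2, e1}
  complete := by intro x; cases x <;> simp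

def upList : SpinE → List SpinE
  | e0 => [e0, e12, e13, e14, e15, e23, e24, e25, e34, e35, e45, e5, e4, e3, e2, e1]
  | e12 => [e12, e13, e14, e15, e23, e24, e25, e34, e35, e45, e5, e4, e3, e2, e1]
  | e13 => [e13, e14, e15, e23, e24, e25, e34, e35, e45, e5, e4, e3, e2, e1]
  | e14 => [e14, e15, e24, e25, e34, e35, e45, e5, e4, e3, e2, e1]
  | e15 => [e15, e25, e35, e45, e4, e3, e2, e1]
  | e23 => [e23, e24, e25, e34, e35, e45, e5, e4, e3, e2, e1]
  | e24 => [e24, e25, e34, e35, e45, e5, e4, e3, e2, e1]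
  | e25 => [e25, e35, e45, e4, e3, e2, e1]
  | e34 => [e34, e35, e45, e5, e4, e3, e2, e1]
  | e35 => [e35, e45, e4, e3, e2, e1]
  | e45 => [e45, e3, e2, e1]
  | e5 => [e5, e4, e3, e2, e1]
  | e4 => [e4, e3, e2, e1]
  | e3 => [e3, e2, e1]
  | e2 => [e2, e1]
  | e1 => [e1]

def leP (a b : SpinE) : Prop := b ∈ upList a

instance instDecLeP : ∀ a b, Decidable (leP a b) :=
  fun a b => inferInstanceAs (Decidable (b ∈ upList a))

def leAll : ∀ x y : SpinE, leP x y → Relation.ReflTransGen SpinCov x y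
  | e0, e0, _ => Relation.ReflTransGen.refl
  | e0, e12, _ => Relation.ReflTransGen.head SpinCov.c1 (Relation.ReflTransGen.refl)
  | e0, e13, _ => Relation.ReflTransGen.head SpinCov.c1 (Relation.ReflTransGen.head SpinCov.c2 (Relation.ReflTransGen.refl))
  | e0, e14, _ => Relation.ReflTransGen.head SpinCov.c1 (Relation.ReflTransGen.head SpinCov.c2 (Relation.ReflTransGen.head SpinCov.c4 (Relation.ReflTransGen.refl)))
  | e0, e15, _ => Relation.ReflTransGen.head SpinCov.c1 (Relation.ReflTransGen.head SpinCov.c2 (Relation.ReflTransGen.head SpinCov.c4 (Relation.ReflTransGen.head SpinCov.c7 (Relation.ReflTransGen.refl))))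
  | e0, e23, _ => Relation.ReflTransGen.head SpinCov.c1 (Relation.ReflTransGen.head SpinCov.c2 (Relation.ReflTransGen.head SpinCov.c3 (Relation.ReflTransGen.refl)))
  | e0, e24, _ => Relation.ReflTransGen.head SpinCov.c1 (Relation.ReflTransGen.head SpinCov.c2 (Relation.ReflTransGen.head SpinCov.c3 (Relation.ReflTransGen.head SpinCov.c5 (Relation.ReflTransGen.refl))))
  | e0, e25, _ => Relation.ReflTransGen.head SpinCov.c1 (Relation.ReflTransGen.head SpinCov.c2 (Relation.ReflTransGen.head SpinCov.c3 (Relation.ReflTransGen.head SpinCov.c5 (Relation.ReflTransGen.head SpinCov.c9 (Relation.ReflTransGen.refl)))))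
  | e0, e34, _ => Relation.ReflTransGen.head SpinCov.c1 (Relation.ReflTransGen.head SpinCov.c2 (Relation.ReflTransGen.head SpinCov.c3 (Relation.ReflTransGen.head SpinCov.c5 (Relation.ReflTransGen.head SpinCov.c8 (Relation.ReflTransGen.refl)))))
  | e0, e35, _ => Relation.ReflTransGen.head SpinCov.c1 (Relation.ReflTransGen.head SpinCov.c2 (Relation.ReflTransGen.head SpinCov.c3 (Relation.ReflTransGen.head SpinCov.c5 (Relation.ReflTransGen.head SpinCov.c8 (Relation.ReflTransGen.head SpinCov.c12 (Relation.ReflTransGen.refl))))))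
  | e0, e45, _ => Relation.ReflTransGen.head SpinCov.c1 (Relation.ReflTransGen.head SpinCov.c2 (Relation.ReflTransGen.head SpinCov.c3 (Relation.ReflTransGen.head SpinCov.c5 (Relation.ReflTransGen.head SpinCov.c8 (Relation.ReflTransGen.head SpinCov.c12 (Relation.ReflTransGen.head SpinCov.c16 (Relation.ReflTransGen.refl)))))))
  | e0, e5, _ => Relation.ReflTransGen.head SpinCov.c1 (Relation.ReflTransGen.head SpinCov.c2 (Relation.ReflTransGen.head SpinCov.c3 (Relation.ReflTransGen.head SpinCov.c5 (Relation.ReflTransGen.head SpinCov.c8 (Relation.ReflTransGen.head SpinCov.c11 (Relation.ReflTransGen.refl))))))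
  | e0, e4, _ => Relation.ReflTransGen.head SpinCov.c1 (Relation.ReflTransGen.head SpinCov.c2 (Relation.ReflTransGen.head SpinCov.c3 (Relation.ReflTransGen.head SpinCov.c5 (Relation.ReflTransGen.head SpinCov.c8 (Relation.ReflTransGen.head SpinCov.c11 (Relation.ReflTransGen.head SpinCov.c14 (Relation.ReflTransGen.refl)))))))
  | e0, e3, _ => Relation.ReflTransGen.head SpinCov.c1 (Relation.ReflTransGen.head SpinCov.c2 (Relation.ReflTransGen.head SpinCov.c3 (Relation.ReflTransGen.head SpinCov.c5 (Relation.ReflTransGen.head SpinCov.c8 (Relation.ReflTransGen.head SpinCov.c11 (Relation.ReflTransGen.head SpinCov.c14 (Relation.ReflTransGen.head SpinCov.c17 (Relation.ReflTransGen.refl))))))))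
  | e0, e2, _ => Relation.ReflTransGen.head SpinCov.c1 (Relation.ReflTransGen.head SpinCov.c2 (Relation.ReflTransGen.head SpinCov.c3 (Relation.ReflTransGen.head SpinCov.c5 (Relation.ReflTransGen.head SpinCov.c8 (Relation.ReflTransGen.head SpinCov.c11 (Relation.ReflTransGen.head SpinCov.c14 (Relation.ReflTransGen.head SpinCov.c17 (Relation.ReflTransGen.head SpinCov.c19 (Relation.ReflTransGen.refl)))))))))
  | e0, e1, _ => Relation.ReflTransGen.head SpinCov.c1 (Relation.ReflTransGen.head SpinCov.c2 (Relation.ReflTransGen.head SpinCov.c3 (Relation.ReflTransGen.head SpinCov.c5 (Relation.ReflTransGen.head SpinCov.c8 (Relation.ReflTransGen.head SpinCov.c11 (Relation.ReflTransGen.head SpinCov.c14 (Relation.ReflTransGen.head SpinCov.c17 (Relation.ReflTransGen.head SpinCov.c19 (Relation.ReflTransGen.head SpinCov.c20 (Relation.ReflTransGen.refl))))))))))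
  | e12, e0, h => absurd h (by decide)
  | e12, e12, _ => Relation.ReflTransGen.refl
  | e12, e13, _ => Relation.ReflTransGen.head SpinCov.c2 (Relation.ReflTransGen.refl)
  | e12, e14, _ => Relation.ReflTransGen.head SpinCov.c2 (Relation.ReflTransGen.head SpinCov.c4 (Relation.ReflTransGen.refl))
  | e12, e15, _ => Relation.ReflTransGen.head SpinCov.c2 (Relation.ReflTransGen.head SpinCov.c4 (Relation.ReflTransGen.head SpinCov.c7 (Relation.ReflTransGen.refl)))
  | e12, e23, _ => Relation.ReflTransGen.head SpinCov.c2 (Relation.ReflTransGen.head SpinCov.c3 (Relation.ReflTransGen.refl))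
  | e12, e24, _ => Relation.ReflTransGen.head SpinCov.c2 (Relation.ReflTransGen.head SpinCov.c3 (Relation.ReflTransGen.head SpinCov.c5 (Relation.ReflTransGen.refl)))
  | e12, e25, _ => Relation.ReflTransGen.head SpinCov.c2 (Relation.ReflTransGen.head SpinCov.c3 (Relation.ReflTransGen.head SpinCov.c5 (Relation.ReflTransGen.head SpinCov.c9 (Relation.ReflTransGen.refl))))
  | e12, e34, _ => Relation.ReflTransGen.head SpinCov.c2 (Relation.ReflTransGen.head SpinCov.c3 (Relation.ReflTransGen.head SpinCov.c5 (Relation.ReflTransGen.head SpinCov.c8 (Relation.ReflTransGen.refl))))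
  | e12, e35, _ => Relation.ReflTransGen.head SpinCov.c2 (Relation.ReflTransGen.head SpinCov.c3 (Relation.ReflTransGen.head SpinCov.c5 (Relation.ReflTransGen.head SpinCov.c8 (Relation.ReflTransGen.head SpinCov.c12 (Relation.ReflTransGen.refl)))))
  | e12, e45, _ => Relation.ReflTransGen.head SpinCov.c2 (Relation.ReflTransGen.head SpinCov.c3 (Relation.ReflTransGen.head SpinCov.c5 (Relation.ReflTransGen.head SpinCov.c8 (Relation.ReflTransGen.head SpinCov.c12 (Relation.ReflTransGen.head SpinCov.c16 (Relation.ReflTransGen.refl))))))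
  | e12, e5, _ => Relation.ReflTransGen.head SpinCov.c2 (Relation.ReflTransGen.head SpinCov.c3 (Relation.ReflTransGen.head SpinCov.c5 (Relation.ReflTransGen.head SpinCov.c8 (Relation.ReflTransGen.head SpinCov.c11 (Relation.ReflTransGen.refl)))))
  | e12, e4, _ => Relation.ReflTransGen.head SpinCov.c2 (Relation.ReflTransGen.head SpinCov.c3 (Relation.ReflTransGen.head SpinCov.c5 (Relation.ReflTransGen.head SpinCov.c8 (Relation.ReflTransGen.head SpinCov.c11 (Relation.ReflTransGen.head SpinCov.c14 (Relation.ReflTransGen.refl))))))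
  | e12, e3, _ => Relation.ReflTransGen.head SpinCov.c2 (Relation.ReflTransGen.head SpinCov.c3 (Relation.ReflTransGen.head SpinCov.c5 (Relation.ReflTransGen.head SpinCov.c8 (Relation.ReflTransGen.head SpinCov.c11 (Relation.ReflTransGen.head SpinCov.c14 (Relation.ReflTransGen.head SpinCov.c17 (Relation.ReflTransGen.refl)))))))
  | e12, e2, _ => Relation.ReflTransGen.head SpinCov.c2 (Relation.ReflTransGen.head SpinCov.c3 (Relation.ReflTransGen.head SpinCov.c5 (Relation.ReflTransGen.head SpinCov.c8 (Relation.ReflTransGen.head SpinCov.c11 (Relation.ReflTransGen.head SpinCov.c14 (Relation.ReflTransGen.head SpinCov.c17 (Relation.ReflTransGen.head SpinCov.c19 (Relation.ReflTransGen.refl))))))))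
  | e12, e1, _ => Relation.ReflTransGen.head SpinCov.c2 (Relation.ReflTransGen.head SpinCov.c3 (Relation.ReflTransGen.head SpinCov.c5 (Relation.ReflTransGen.head SpinCov.c8 (Relation.ReflTransGen.head SpinCov.c11 (Relation.ReflTransGen.head SpinCov.c14 (Relation.ReflTransGen.head SpinCov.c17 (Relation.ReflTransGen.head SpinCov.c19 (Relation.ReflTransGen.head SpinCov.c20 (Relation.ReflTransGen.refl)))))))))
  | e13, e0, h => absurd h (by decide)
  | e13, e12, h => absurd h (by decide)
  | e13, e13, _ => Relation.ReflTransGen.refl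
  | e13, e14, _ => Relation.ReflTransGen.head SpinCov.c4 (Relation.ReflTransGen.refl)
  | e13, e15, _ => Relation.ReflTransGen.head SpinCov.c4 (Relation.ReflTransGen.head SpinCov.c7 (Relation.ReflTransGen.refl))
  | e13, e23, _ => Relation.ReflTransGen.head SpinCov.c3 (Relation.ReflTransGen.refl)
  | e13, e24, _ => Relation.ReflTransGen.head SpinCov.c3 (Relation.ReflTransGen.head SpinCov.c5 (Relation.ReflTransGen.refl))
  | e13, e25, _ => Relation.ReflTransGen.head SpinCov.c3 (Relation.ReflTransGen.head SpinCov.c5 (Relation.ReflTransGen.head SpinCov.c9 (Relation.ReflTransGen.refl)))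
  | e13, e34, _ => Relation.ReflTransGen.head SpinCov.c3 (Relation.ReflTransGen.head SpinCov.c5 (Relation.ReflTransGen.head SpinCov.c8 (Relation.ReflTransGen.refl)))
  | e13, e35, _ => Relation.ReflTransGen.head SpinCov.c3 (Relation.ReflTransGen.head SpinCov.c5 (Relation.ReflTransGen.head SpinCov.c8 (Relation.ReflTransGen.head SpinCov.c12 (Relation.ReflTransGen.refl))))
  | e13, e45, _ => Relation.ReflTransGen.head SpinCov.c3 (Relation.ReflTransGen.head SpinCov.c5 (Relation.ReflTransGen.head SpinCov.c8 (Relation.ReflTransGen.head SpinCov.c12 (Relation.ReflTransGen.head SpinCov.c16 (Relation.ReflTransGen.refl)))))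
  | e13, e5, _ => Relation.ReflTransGen.head SpinCov.c3 (Relation.ReflTransGen.head SpinCov.c5 (Relation.ReflTransGen.head SpinCov.c8 (Relation.ReflTransGen.head SpinCov.c11 (Relation.ReflTransGen.refl))))
  | e13, e4, _ => Relation.ReflTransGen.head SpinCov.c3 (Relation.ReflTransGen.head SpinCov.c5 (Relation.ReflTransGen.head SpinCov.c8 (Relation.ReflTransGen.head SpinCov.c11 (Relation.ReflTransGen.head SpinCov.c14 (Relation.ReflTransGen.refl)))))
  | e13, e3, _ => Relation.ReflTransGen.head SpinCov.c3 (Relation.ReflTransGen.head SpinCov.c5 (Relation.ReflTransGen.head SpinCov.c8 (Relation.ReflTransGen.head SpinCov.c11 (Relation.ReflTransGen.head SpinCov.c14 (Relation.ReflTransGen.head SpinCov.c17 (Relation.ReflTransGen.refl))))))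
  | e13, e2, _ => Relation.ReflTransGen.head SpinCov.c3 (Relation.ReflTransGen.head SpinCov.c5 (Relation.ReflTransGen.head SpinCov.c8 (Relation.ReflTransGen.head SpinCov.c11 (Relation.ReflTransGen.head SpinCov.c14 (Relation.ReflTransGen.head SpinCov.c17 (Relation.ReflTransGen.head SpinCov.c19 (Relation.ReflTransGen.refl)))))))
  | e13, e1, _ => Relation.ReflTransGen.head SpinCov.c3 (Relation.ReflTransGen.head SpinCov.c5 (Relation.ReflTransGen.head SpinCov.c8 (Relation.ReflTransGen.head SpinCov.c11 (Relation.ReflTransGen.head SpinCov.c14 (Relation.ReflTransGen.head SpinCov.c17 (Relation.ReflTransGen.head SpinCov.c19 (Relation.ReflTransGen.head SpinCov.c20 (Relation.ReflTransGen.refl))))))))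
  | e14, e0, h => absurd h (by decide)
  | e14, e12, h => absurd h (by decide)
  | e14, e13, h => absurd h (by decide)
  | e14, e14, _ => Relation.ReflTransGen.refl
  | e14, e15, _ => Relation.ReflTransGen.head SpinCov.c7 (Relation.ReflTransGen.refl)
  | e14, e23, h => absurd h (by decide)
  | e14, e24, _ => Relation.ReflTransGen.head SpinCov.c6 (Relation.ReflTransGen.refl)
  | e14, e25, _ => Relation.ReflTransGen.head SpinCov.c6 (Relation.ReflTransGen.head SpinCov.c9 (Relation.ReflTransGen.refl))
  | e14, e34, _ => Relation.ReflTransGen.head SpinCov.c6 (Relation.ReflTransGen.head SpinCov.c8 (Relation.ReflTransGen.refl))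
  | e14, e35, _ => Relation.ReflTransGen.head SpinCov.c6 (Relation.ReflTransGen.head SpinCov.c8 (Relation.ReflTransGen.head SpinCov.c12 (Relation.ReflTransGen.refl)))
  | e14, e45, _ => Relation.ReflTransGen.head SpinCov.c6 (Relation.ReflTransGen.head SpinCov.c8 (Relation.ReflTransGen.head SpinCov.c12 (Relation.ReflTransGen.head SpinCov.c16 (Relation.ReflTransGen.refl))))
  | e14, e5, _ => Relation.ReflTransGen.head SpinCov.c6 (Relation.ReflTransGen.head SpinCov.c8 (Relation.ReflTransGen.head SpinCov.c11 (Relation.ReflTransGen.refl)))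
  | e14, e4, _ => Relation.ReflTransGen.head SpinCov.c6 (Relation.ReflTransGen.head SpinCov.c8 (Relation.ReflTransGen.head SpinCov.c11 (Relation.ReflTransGen.head SpinCov.c14 (Relation.ReflTransGen.refl))))
  | e14, e3, _ => Relation.ReflTransGen.head SpinCov.c6 (Relation.ReflTransGen.head SpinCov.c8 (Relation.ReflTransGen.head SpinCov.c11 (Relation.ReflTransGen.head SpinCov.c14 (Relation.ReflTransGen.head SpinCov.c17 (Relation.ReflTransGen.refl)))))
  | e14, e2, _ => Relation.ReflTransGen.head SpinCov.c6 (Relation.ReflTransGen.head SpinCov.c8 (Relation.ReflTransGen.head SpinCov.c11 (Relation.ReflTransGen.head SpinCov.c14 (Relation.ReflTransGen.head SpinCov.c17 (Relation.ReflTransGen.head SpinCov.c19 (Relation.ReflTransGen.refl))))))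
  | e14, e1, _ => Relation.ReflTransGen.head SpinCov.c6 (Relation.ReflTransGen.head SpinCov.c8 (Relation.ReflTransGen.head SpinCov.c11 (Relation.ReflTransGen.head SpinCov.c14 (Relation.ReflTransGen.head SpinCov.c17 (Relation.ReflTransGen.head SpinCov.c19 (Relation.ReflTransGen.head SpinCov.c20 (Relation.ReflTransGen.refl)))))))
  | e15, e0, h => absurd h (by decide)
  | e15, e12, h => absurd h (by decide)
  | e15, e13, h => absurd h (by decide)
  | e15, e14, h => absurd h (by decide)
  | e15, e15, _ => Relation.ReflTransGen.refl
  | e15, e23, h => absurd h (by decide)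
  | e15, e24, h => absurd h (by decide)
  | e15, e25, _ => Relation.ReflTransGen.head SpinCov.c10 (Relation.ReflTransGen.refl)
  | e15, e34, h => absurd h (by decide)
  | e15, e35, _ => Relation.ReflTransGen.head SpinCov.c10 (Relation.ReflTransGen.head SpinCov.c13 (Relation.ReflTransGen.refl))
  | e15, e45, _ => Relation.ReflTransGen.head SpinCov.c10 (Relation.ReflTransGen.head SpinCov.c13 (Relation.ReflTransGen.head SpinCov.c16 (Relation.ReflTransGen.refl)))
  | e15, e5, h => absurd h (by decide)
  | e15, e4, _ => Relation.ReflTransGen.head SpinCov.c10 (Relation.ReflTransGen.head SpinCov.c13 (Relation.ReflTransGen.head SpinCov.c15 (Relation.ReflTransGen.refl)))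
  | e15, e3, _ => Relation.ReflTransGen.head SpinCov.c10 (Relation.ReflTransGen.head SpinCov.c13 (Relation.ReflTransGen.head SpinCov.c15 (Relation.ReflTransGen.head SpinCov.c17 (Relation.ReflTransGen.refl))))
  | e15, e2, _ => Relation.ReflTransGen.head SpinCov.c10 (Relation.ReflTransGen.head SpinCov.c13 (Relation.ReflTransGen.head SpinCov.c15 (Relation.ReflTransGen.head SpinCov.c17 (Relation.ReflTransGen.head SpinCov.c19 (Relation.ReflTransGen.refl)))))
  | e15, e1, _ => Relation.ReflTransGen.head SpinCov.c10 (Relation.ReflTransGen.head SpinCov.c13 (Relation.ReflTransGen.head SpinCov.c15 (Relation.ReflTransGen.head SpinCov.c17 (Relation.ReflTransGen.head SpinCov.c19 (Relation.ReflTransGen.head SpinCov.c20 (Relation.ReflTransGen.refl))))))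
  | e23, e0, h => absurd h (by decide)
  | e23, e12, h => absurd h (by decide)
  | e23, e13, h => absurd h (by decide)
  | e23, e14, h => absurd h (by decide)
  | e23, e15, h => absurd h (by decide)
  | e23, e23, _ => Relation.ReflTransGen.refl
  | e23, e24, _ => Relation.ReflTransGen.head SpinCov.c5 (Relation.ReflTransGen.refl)
  | e23, e25, _ => Relation.ReflTransGen.head SpinCov.c5 (Relation.ReflTransGen.head SpinCov.c9 (Relation.ReflTransGen.refl))
  | e23, e34, _ => Relation.ReflTransGen.head SpinCov.c5 (Relation.ReflTransGen.head SpinCov.c8 (Relation.ReflTransGen.refl))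
  | e23, e35, _ => Relation.ReflTransGen.head SpinCov.c5 (Relation.ReflTransGen.head SpinCov.c8 (Relation.ReflTransGen.head SpinCov.c12 (Relation.ReflTransGen.refl)))
  | e23, e45, _ => Relation.ReflTransGen.head SpinCov.c5 (Relation.ReflTransGen.head SpinCov.c8 (Relation.ReflTransGen.head SpinCov.c12 (Relation.ReflTransGen.head SpinCov.c16 (Relation.ReflTransGen.refl))))
  | e23, e5, _ => Relation.ReflTransGen.head SpinCov.c5 (Relation.ReflTransGen.head SpinCov.c8 (Relation.ReflTransGen.head SpinCov.c11 (Relation.ReflTransGen.refl)))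
  | e23, e4, _ => Relation.ReflTransGen.head SpinCov.c5 (Relation.ReflTransGen.head SpinCov.c8 (Relation.ReflTransGen.head SpinCov.c11 (Relation.ReflTransGen.head SpinCov.c14 (Relation.ReflTransGen.refl))))
  | e23, e3, _ => Relation.ReflTransGen.head SpinCov.c5 (Relation.ReflTransGen.head SpinCov.c8 (Relation.ReflTransGen.head SpinCov.c11 (Relation.ReflTransGen.head SpinCov.c14 (Relation.ReflTransGen.head SpinCov.c17 (Relation.ReflTransGen.refl)))))
  | e23, e2, _ => Relation.ReflTransGen.head SpinCov.c5 (Relation.ReflTransGen.head SpinCov.c8 (Relation.ReflTransGen.head SpinCov.c11 (Relation.ReflTransGen.head SpinCov.c14 (Relation.ReflTransGen.head SpinCov.c17 (Relation.ReflTransGen.head SpinCov.c19 (Relation.ReflTransGen.refl))))))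
  | e23, e1, _ => Relation.ReflTransGen.head SpinCov.c5 (Relation.ReflTransGen.head SpinCov.c8 (Relation.ReflTransGen.head SpinCov.c11 (Relation.ReflTransGen.head SpinCov.c14 (Relation.ReflTransGen.head SpinCov.c17 (Relation.ReflTransGen.head SpinCov.c19 (Relation.ReflTransGen.head SpinCov.c20 (Relation.ReflTransGen.refl)))))))
  | e24, e0, h => absurd h (by decide)
  | e24, e12, h => absurd h (by decide)
  | e24, e13, h => absurd h (by decide)
  | e24, e14, h => absurd h (by decide)
  | e24, e15, h => absurd h (by decide)
  | e24, e23, h => absurd h (by decide)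
  | e24, e24, _ => Relation.ReflTransGen.refl
  | e24, e25, _ => Relation.ReflTransGen.head SpinCov.c9 (Relation.ReflTransGen.refl)
  | e24, e34, _ => Relation.ReflTransGen.head SpinCov.c8 (Relation.ReflTransGen.refl)
  | e24, e35, _ => Relation.ReflTransGen.head SpinCov.c8 (Relation.ReflTransGen.head SpinCov.c12 (Relation.ReflTransGen.refl))
  | e24, e45, _ => Relation.ReflTransGen.head SpinCov.c8 (Relation.ReflTransGen.head SpinCov.c12 (Relation.ReflTransGen.head SpinCov.c16 (Relation.ReflTransGen.refl)))
  | e24, e5, _ => Relation.ReflTransGen.head SpinCov.c8 (Relation.ReflTransGen.head SpinCov.c11 (Relation.ReflTransGen.refl))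
  | e24, e4, _ => Relation.ReflTransGen.head SpinCov.c8 (Relation.ReflTransGen.head SpinCov.c11 (Relation.ReflTransGen.head SpinCov.c14 (Relation.ReflTransGen.refl)))
  | e24, e3, _ => Relation.ReflTransGen.head SpinCov.c8 (Relation.ReflTransGen.head SpinCov.c11 (Relation.ReflTransGen.head SpinCov.c14 (Relation.ReflTransGen.head SpinCov.c17 (Relation.ReflTransGen.refl))))
  | e24, e2, _ => Relation.ReflTransGen.head SpinCov.c8 (Relation.ReflTransGen.head SpinCov.c11 (Relation.ReflTransGen.head SpinCov.c14 (Relation.ReflTransGen.head SpinCov.c17 (Relation.ReflTransGen.head SpinCov.c19 (Relation.ReflTransGen.refl)))))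
  | e24, e1, _ => Relation.ReflTransGen.head SpinCov.c8 (Relation.ReflTransGen.head SpinCov.c11 (Relation.ReflTransGen.head SpinCov.c14 (Relation.ReflTransGen.head SpinCov.c17 (Relation.ReflTransGen.head SpinCov.c19 (Relation.ReflTransGen.head SpinCov.c20 (Relation.ReflTransGen.refl))))))
  | e25, e0, h => absurd h (by decide)
  | e25, e12, h => absurd h (by decide)
  | e25, e13, h => absurd h (by decide)
  | e25, e14, h => absurd h (by decide)
  | e25, e15, h => absurd h (by decide)
  | e25, e23, h => absurd h (by decide)
  | e25, e24, h => absurd h (by decide)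
  | e25, e25, _ => Relation.ReflTransGen.refl
  | e25, e34, h => absurd h (by decide)
  | e25, e35, _ => Relation.ReflTransGen.head SpinCov.c13 (Relation.ReflTransGen.refl)
  | e25, e45, _ => Relation.ReflTransGen.head SpinCov.c13 (Relation.ReflTransGen.head SpinCov.c16 (Relation.ReflTransGen.refl))
  | e25, e5, h => absurd h (by decide)
  | e25, e4, _ => Relation.ReflTransGen.head SpinCov.c13 (Relation.ReflTransGen.head SpinCov.c15 (Relation.ReflTransGen.refl))
  | e25, e3, _ => Relation.ReflTransGen.head SpinCov.c13 (Relation.ReflTransGen.head SpinCov.c15 (Relation.ReflTransGen.head SpinCov.c17 (Relation.ReflTransGen.refl)))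
  | e25, e2, _ => Relation.ReflTransGen.head SpinCov.c13 (Relation.ReflTransGen.head SpinCov.c15 (Relation.ReflTransGen.head SpinCov.c17 (Relation.ReflTransGen.head SpinCov.c19 (Relation.ReflTransGen.refl))))
  | e25, e1, _ => Relation.ReflTransGen.head SpinCov.c13 (Relation.ReflTransGen.head SpinCov.c15 (Relation.ReflTransGen.head SpinCov.c17 (Relation.ReflTransGen.head SpinCov.c19 (Relation.ReflTransGen.head SpinCov.c20 (Relation.ReflTransGen.refl)))))
  | e34, e0, h => absurd h (by decide)
  | e34, e12, h => absurd h (by decide)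
  | e34, e13, h => absurd h (by decide)
  | e34, e14, h => absurd h (by decide)
  | e34, e15, h => absurd h (by decide)
  | e34, e23, h => absurd h (by decide)
  | e34, e24, h => absurd h (by decide)
  | e34, e25, h => absurd h (by decide)
  | e34, e34, _ => Relation.ReflTransGen.refl
  | e34, e35, _ => Relation.ReflTransGen.head SpinCov.c12 (Relation.ReflTransGen.refl)
  | e34, e45, _ => Relation.ReflTransGen.head SpinCov.c12 (Relation.ReflTransGen.head SpinCov.c16 (Relation.ReflTransGen.refl))
  | e34, e5, _ => Relation.ReflTransGen.head SpinCov.c11 (Relation.ReflTransGen.refl)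
  | e34, e4, _ => Relation.ReflTransGen.head SpinCov.c11 (Relation.ReflTransGen.head SpinCov.c14 (Relation.ReflTransGen.refl))
  | e34, e3, _ => Relation.ReflTransGen.head SpinCov.c11 (Relation.ReflTransGen.head SpinCov.c14 (Relation.ReflTransGen.head SpinCov.c17 (Relation.ReflTransGen.refl)))
  | e34, e2, _ => Relation.ReflTransGen.head SpinCov.c11 (Relation.ReflTransGen.head SpinCov.c14 (Relation.ReflTransGen.head SpinCov.c17 (Relation.ReflTransGen.head SpinCov.c19 (Relation.ReflTransGen.refl))))
  | e34, e1, _ => Relation.ReflTransGen.head SpinCov.c11 (Relation.ReflTransGen.head SpinCov.c14 (Relation.ReflTransGen.head SpinCov.c17 (Relation.ReflTransGen.head SpinCov.c19 (Relation.ReflTransGen.head SpinCov.c20 (Relation.ReflTransGen.refl)))))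
  | e35, e0, h => absurd h (by decide)
  | e35, e12, h => absurd h (by decide)
  | e35, e13, h => absurd h (by decide)
  | e35, e14, h => absurd h (by decide)
  | e35, e15, h => absurd h (by decide)
  | e35, e23, h => absurd h (by decide)
  | e35, e24, h => absurd h (by decide)
  | e35, e25, h => absurd h (by decide)
  | e35, e34, h => absurd h (by decide)
  | e35, e35, _ => Relation.ReflTransGen.refl
  | e35, e45, _ => Relation.ReflTransGen.head SpinCov.c16 (Relation.ReflTransGen.refl)
  | e35, e5, h => absurd h (by decide)
  | e35, e4, _ => Relation.ReflTransGen.head SpinCov.c15 (Relation.ReflTransGen.refl)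
  | e35, e3, _ => Relation.ReflTransGen.head SpinCov.c15 (Relation.ReflTransGen.head SpinCov.c17 (Relation.ReflTransGen.refl))
  | e35, e2, _ => Relation.ReflTransGen.head SpinCov.c15 (Relation.ReflTransGen.head SpinCov.c17 (Relation.ReflTransGen.head SpinCov.c19 (Relation.ReflTransGen.refl)))
  | e35, e1, _ => Relation.ReflTransGen.head SpinCov.c15 (Relation.ReflTransGen.head SpinCov.c17 (Relation.ReflTransGen.head SpinCov.c19 (Relation.ReflTransGen.head SpinCov.c20 (Relation.ReflTransGen.refl))))
  | e45, e0, h => absurd h (by decide)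
  | e45, e12, h => absurd h (by decide)
  | e45, e13, h => absurd h (by decide)
  | e45, e14, h => absurd h (by decide)
  | e45, e15, h => absurd h (by decide)
  | e45, e23, h => absurd h (by decide)
  | e45, e24, h => absurd h (by decide)
  | e45, e25, h => absurd h (by decide)
  | e45, e34, h => absurd h (by decide)
  | e45, e35, h => absurd h (by decide)
  | e45, e45, _ => Relation.ReflTransGen.refl
  | e45, e5, h => absurd h (by decide)
  | e45, e4, h => absurd h (by decide)
  | e45, e3, _ => Relation.ReflTransGen.head SpinCov.c18 (Relation.ReflTransGen.refl)
  | e45, e2, _ => Relation.ReflTransGen.head SpinCov.c18 (Relation.ReflTransGen.head SpinCov.c19 (Relation.ReflTransGen.refl))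
  | e45, e1, _ => Relation.ReflTransGen.head SpinCov.c18 (Relation.ReflTransGen.head SpinCov.c19 (Relation.ReflTransGen.head SpinCov.c20 (Relation.ReflTransGen.refl)))
  | e5, e0, h => absurd h (by decide)
  | e5, e12, h => absurd h (by decide)
  | e5, e13, h => absurd h (by decide)
  | e5, e14, h => absurd h (by decide)
  | e5, e15, h => absurd h (by decide)
  | e5, e23, h => absurd h (by decide)
  | e5, e24, h => absurd h (by decide)
  | e5, e25, h => absurd h (by decide)
  | e5, e34, h => absurd h (by decide)
  | e5, e35, h => absurd h (by decide)
  | e5, e45, h => absurd h (by decide)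
  | e5, e5, _ => Relation.ReflTransGen.refl
  | e5, e4, _ => Relation.ReflTransGen.head SpinCov.c14 (Relation.ReflTransGen.refl)
  | e5, e3, _ => Relation.ReflTransGen.head SpinCov.c14 (Relation.ReflTransGen.head SpinCov.c17 (Relation.ReflTransGen.refl))
  | e5, e2, _ => Relation.ReflTransGen.head SpinCov.c14 (Relation.ReflTransGen.head SpinCov.c17 (Relation.ReflTransGen.head SpinCov.c19 (Relation.ReflTransGen.refl)))
  | e5, e1, _ => Relation.ReflTransGen.head SpinCov.c14 (Relation.ReflTransGen.head SpinCov.c17 (Relation.ReflTransGen.head SpinCov.c19 (Relation.ReflTransGen.head SpinCov.c20 (Relation.ReflTransGen.refl))))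
  | e4, e0, h => absurd h (by decide)
  | e4, e12, h => absurd h (by decide)
  | e4, e13, h => absurd h (by decide)
  | e4, e14, h => absurd h (by decide)
  | e4, e15, h => absurd h (by decide)
  | e4, e23, h => absurd h (by decide)
  | e4, e24, h => absurd h (by decide)
  | e4, e25, h => absurd h (by decide)
  | e4, e34, h => absurd h (by decide)
  | e4, e35, h => absurd h (by decide)
  | e4, e45, h => absurd h (by decide)
  | e4, e5, h => absurd h (by decide)
  | e4, e4, _ => Relation.ReflTransGen.refl
  | e4, e3, _ => Relation.ReflTransGen.head SpinCov.c17 (Relation.ReflTransGen.refl)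
  | e4, e2, _ => Relation.ReflTransGen.head SpinCov.c17 (Relation.ReflTransGen.head SpinCov.c19 (Relation.ReflTransGen.refl))
  | e4, e1, _ => Relation.ReflTransGen.head SpinCov.c17 (Relation.ReflTransGen.head SpinCov.c19 (Relation.ReflTransGen.head SpinCov.c20 (Relation.ReflTransGen.refl)))
  | e3, e0, h => absurd h (by decide)
  | e3, e12, h => absurd h (by decide)
  | e3, e13, h => absurd h (by decide)
  | e3, e14, h => absurd h (by decide)
  | e3, e15, h => absurd h (by decide)
  | e3, e23, h => absurd h (by decide)
  | e3, e24, h => absurd h (by decide)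
  | e3, e25, h => absurd h (by decide)
  | e3, e34, h => absurd h (by decide)
  | e3, e35, h => absurd h (by decide)
  | e3, e45, h => absurd h (by decide)
  | e3, e5, h => absurd h (by decide)
  | e3, e4, h => absurd h (by decide)
  | e3, e3, _ => Relation.ReflTransGen.refl
  | e3, e2, _ => Relation.ReflTransGen.head SpinCov.c19 (Relation.ReflTransGen.refl)
  | e3, e1, _ => Relation.ReflTransGen.head SpinCov.c19 (Relation.ReflTransGen.head SpinCov.c20 (Relation.ReflTransGen.refl))
  | e2, e0, h => absurd h (by decide)
  | e2, e12, h => absurd h (by decide)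
  | e2, e13, h => absurd h (by decide)
  | e2, e14, h => absurd h (by decide)
  | e2, e15, h => absurd h (by decide)
  | e2, e23, h => absurd h (by decide)
  | e2, e24, h => absurd h (by decide)
  | e2, e25, h => absurd h (by decide)
  | e2, e34, h => absurd h (by decide)
  | e2, e35, h => absurd h (by decide)
  | e2, e45, h => absurd h (by decide)
  | e2, e5, h => absurd h (by decide)
  | e2, e4, h => absurd h (by decide)
  | e2, e3, h => absurd h (by decide)
  | e2, e2, _ => Relation.ReflTransGen.refl
  | e2, e1, _ => Relation.ReflTransGen.head SpinCov.c20 (Relation.ReflTransGen.refl)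
  | e1, e0, h => absurd h (by decide)
  | e1, e12, h => absurd h (by decide)
  | e1, e13, h => absurd h (by decide)
  | e1, e14, h => absurd h (by decide)
  | e1, e15, h => absurd h (by decide)
  | e1, e23, h => absurd h (by decide)
  | e1, e24, h => absurd h (by decide)
  | e1, e25, h => absurd h (by decide)
  | e1, e34, h => absurd h (by decide)
  | e1, e35, h => absurd h (by decide)
  | e1, e45, h => absurd h (by decide)
  | e1, e5, h => absurd h (by decide)
  | e1, e4, h => absurd h (by decide)
  | e1, e3, h => absurd h (by decide)
  | e1, e2, h => absurd h (by decide)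
  | e1, e1, _ => Relation.ReflTransGen.refl


theorem leP_of_le : ∀ x y : SpinE, Relation.ReflTransGen SpinCov x y → leP x y := by
  intro x y h
  induction h with
  | refl => cases x <;> decide
  | @tail b c hxb hbc ih =>
    clear hxb
    revert x
    cases hbc <;> decide

instance : DecidableRel (α := SpinE) (· ≤ ·) :=
  fun x y => decidable_of_iff (leP x y) ⟨leAll x y, leP_of_le x y⟩

example : ¬ (e14 ≤ e23) := by decide
example : (e0 ≤ e35) := by decide

/-- The number of multichains of length `k` in the 8-element interval `[(0),(5)]`. -/
noncomputable def quadricMultichainCount (k : ℕ) : ℕ :=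
  Nat.card {f : Fin k → SpinE //
    (∀ i j : Fin k, i ≤ j → f i ≤ f j) ∧ ∀ i, f i ∈ Set.Icc e0 e5}


section Aux

def toN : SpinE → Fin 8
  | e0 => 0 | e12 => 1 | e13 => 2 | e14 => 3 | e23 => 4 | e24 => 5 | e34 => 6 | _ => 7

def toE : Fin 8 → SpinE
  | 0 => e0 | 1 => e12 | 2 => e13 | 3 => e14 | 4 => e23 | 5 => e24 | 6 => e34 | 7 => e5

lemma toE_mem : ∀ a : Fin 8, e0 ≤ toE a ∧ toE a ≤ e5 := by decide

lemma toN_mono : ∀ x y : SpinE, x ≤ e5 → y ≤ e5 → x ≤ y → toN x ≤ toN y := by decide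

lemma toE_mono : ∀ a b : Fin 8, a ≤ b → ¬(a = 3 ∧ b = 4) → toE a ≤ toE b := by decide

lemma toE_toN : ∀ x : SpinE, x ≤ e5 → toE (toN x) = x := by decide

lemma toN_toE : ∀ a : Fin 8, toN (toE a) = a := by decide

lemma toN_eq3 : ∀ x : SpinE, x ≤ e5 → toN x = 3 → x = e14 := by decide

lemma toN_eq4 : ∀ x : SpinE, x ≤ e5 → toN x = 4 → x = e23 := by decide

lemma not_e14_le_e23 : ¬ e14 ≤ e23 := by decide

lemma not_e23_le_e14 : ¬ e23 ≤ e14 := by decide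

/-- Transfer multichains in the interval to monotone functions into `Fin 8`
avoiding simultaneous values `3` and `4`. -/
def equivM8 (k : ℕ) :
    {f : Fin k → SpinE //
      (∀ i j : Fin k, i ≤ j → f i ≤ f j) ∧ ∀ i, f i ∈ Set.Icc e0 e5} ≃
    {f : Fin k → Fin 8 // Monotone f ∧ ¬((∃ i, f i = 3) ∧ (∃ j, f j = 4))} where
  toFun f := ⟨fun i => toN (f.1 i), by
    obtain ⟨f, hmono, hmem⟩ := f
    have h5 : ∀ i, f i ≤ e5 := fun i => (Set.mem_Icc.1 (hmem i)).2
    refine ⟨fun i j hij => toN_mono _ _ (h5 i) (h5 j) (hmono i j hij), ?_⟩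
    rintro ⟨⟨i, hi⟩, ⟨j, hj⟩⟩
    have hi' : f i = e14 := toN_eq3 _ (h5 i) hi
    have hj' : f j = e23 := toN_eq4 _ (h5 j) hj
    rcases le_total i j with h | h
    · exact not_e14_le_e23 (hi' ▸ hj' ▸ hmono i j h)
    · exact not_e23_le_e14 (hj' ▸ hi' ▸ hmono j i h)⟩
  invFun f := ⟨fun i => toE (f.1 i), by
    obtain ⟨f, hmono, hnb⟩ := f
    refine ⟨fun i j hij => toE_mono _ _ (hmono hij) ?_,
      fun i => Set.mem_Icc.2 (toE_mem _)⟩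
    rintro ⟨h3, h4⟩
    exact hnb ⟨⟨i, h3⟩, ⟨j, h4⟩⟩⟩
  left_inv f := Subtype.ext (funext fun i =>
    toE_toN _ (Set.mem_Icc.1 (f.2.2 i)).2)
  right_inv f := Subtype.ext (funext fun i => toN_toE (f.1 i))

variable {α : Type*} [LinearOrder α] {k : ℕ}

lemma sort_length (p : Sym α k) : k = (Multiset.sort p.1 (· ≤ ·)).length := by
  rw [Multiset.length_sort, p.2]

/-- Monotone functions `Fin k → α` are equivalent to multisets of size `k`. -/
def sortEquiv (α : Type*) [LinearOrder α] (k : ℕ) :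
    {f : Fin k → α // Monotone f} ≃ Sym α k where
  toFun f := ⟨(List.ofFn f.1 : List α), by simp⟩
  invFun p := ⟨fun i => (Multiset.sort p.1 (· ≤ ·)).get (Fin.cast (sort_length p) i),
    fun i j hij => List.Pairwise.rel_get_of_le (Multiset.pairwise_sort _ _) hij⟩
  left_inv f := by
    have hs : Multiset.sort ((List.ofFn f.1 : List α) : Multiset α) (· ≤ ·) = List.ofFn f.1 :=
      List.Perm.eq_of_pairwise' (Multiset.pairwise_sort _ _)
        (List.pairwise_ofFn.2 fun _ _ h => f.2 h.le)
        (Multiset.coe_eq_coe.1 (Multiset.sort_eq _ _))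
    apply Subtype.ext
    funext i
    simp only [List.get_eq_getElem]
    simp only [hs, List.getElem_ofFn]
    congr 1
  right_inv p := by
    apply Subtype.ext
    dsimp only
    have : List.ofFn (fun i : Fin k =>
        (Multiset.sort p.1 (· ≤ ·)).get (Fin.cast (sort_length p) i)) =
        Multiset.sort p.1 (· ≤ ·) := by
      apply List.ext_get (by simp [Multiset.length_sort, p.2])
      intro n h1 h2
      simp
      rfl
    rw [show ((List.ofFn fun i : Fin k =>
        (Multiset.sort p.1 (· ≤ ·)).get (Fin.cast (sort_length p) i)) : Multiset α)
        = ↑(Multiset.sort p.1 (· ≤ ·)) from congrArg _ this, Multiset.sort_eq]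

lemma mem_sortEquiv {f : {f : Fin k → α // Monotone f}} {a : α} :
    a ∈ sortEquiv α k f ↔ ∃ i, f.1 i = a := by
  show a ∈ ((List.ofFn f.1 : List α) : Multiset α) ↔ _
  rw [Multiset.mem_coe, List.mem_ofFn]

/-- Multichains are equivalent to size-`k` multisets in `Fin 8` not containing
both `3` and `4`. -/
def equivSymPred (k : ℕ) :
    {f : Fin k → SpinE //
      (∀ i j : Fin k, i ≤ j → f i ≤ f j) ∧ ∀ i, f i ∈ Set.Icc e0 e5} ≃
    {p : Sym (Fin 8) k // ¬((3 : Fin 8) ∈ p ∧ (4 : Fin 8) ∈ p)} :=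
  (equivM8 k).trans <|
    ((Equiv.subtypeSubtypeEquivSubtypeInter _ _).symm).trans <|
      (sortEquiv (Fin 8) k).subtypeEquiv fun f => by
        rw [not_iff_not, mem_sortEquiv, mem_sortEquiv]

/-- Multisets containing both `3` and `4` are equivalent to multisets of size two less. -/
def eraseEquiv (k : ℕ) :
    {p : Sym (Fin 8) (k + 2) // (3 : Fin 8) ∈ p ∧ (4 : Fin 8) ∈ p} ≃ Sym (Fin 8) k where
  toFun p := ⟨(p.1.1.erase 3).erase 4, by
    have h3 : (3 : Fin 8) ∈ p.1.1 := p.2.1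
    have h4 : (4 : Fin 8) ∈ p.1.1.erase 3 :=
      (Multiset.mem_erase_of_ne (by decide)).2 p.2.2
    rw [Multiset.card_erase_of_mem h4, Multiset.card_erase_of_mem h3, p.1.2]
    rfl⟩
  invFun q := ⟨⟨(3 : Fin 8) ::ₘ (4 : Fin 8) ::ₘ q.1, by simp [q.2]⟩,
    Multiset.mem_cons_self _ _,
    Multiset.mem_cons.2 (Or.inr (Multiset.mem_cons_self _ _))⟩
  left_inv p := by
    have h3 : (3 : Fin 8) ∈ p.1.1 := p.2.1
    have h4 : (4 : Fin 8) ∈ p.1.1.erase 3 :=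
      (Multiset.mem_erase_of_ne (by decide)).2 p.2.2
    apply Subtype.ext
    apply Subtype.ext
    show (3 : Fin 8) ::ₘ (4 : Fin 8) ::ₘ (p.1.1.erase 3).erase 4 = p.1.1
    rw [Multiset.cons_erase h4, Multiset.cons_erase h3]
  right_inv q := by
    apply Subtype.ext
    show (((3 : Fin 8) ::ₘ (4 : Fin 8) ::ₘ q.1).erase 3).erase 4 = q.1
    rw [Multiset.erase_cons_head, Multiset.erase_cons_head]

instance (k : ℕ) : DecidablePred (fun p : Sym (Fin 8) k => (3 : Fin 8) ∈ p ∧ (4 : Fin 8) ∈ p) :=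
  fun _ => inferInstanceAs (Decidable (_ ∧ _))

/-- The number of size-`k` multisets containing both `3` and `4`. -/
def dcount (k : ℕ) : ℕ :=
  Fintype.card {p : Sym (Fin 8) k // (3 : Fin 8) ∈ p ∧ (4 : Fin 8) ∈ p}

lemma card_sym_fin8 (k : ℕ) : Fintype.card (Sym (Fin 8) k) = (k + 7).choose 7 := by
  rw [Sym.card_sym_eq_choose, Fintype.card_fin]
  rw [show 8 + k - 1 = k + 7 by omega]
  rw [← Nat.choose_symm (by omega : k ≤ k + 7), show k + 7 - k = 7 by omega]

end Aux


lemma mc_card (k : ℕ) :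
    quadricMultichainCount k + dcount k = (k + 7).choose 7 := by
  have h1 : quadricMultichainCount k
      = Fintype.card {p : Sym (Fin 8) k // ¬((3 : Fin 8) ∈ p ∧ (4 : Fin 8) ∈ p)} := by
    rw [quadricMultichainCount, Nat.card_congr (equivSymPred k), Nat.card_eq_fintype_card]
  have h2 := Fintype.card_subtype_compl
    (fun p : Sym (Fin 8) k => (3 : Fin 8) ∈ p ∧ (4 : Fin 8) ∈ p)
  have h3 := Fintype.card_subtype_le
    (fun p : Sym (Fin 8) k => (3 : Fin 8) ∈ p ∧ (4 : Fin 8) ∈ p)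
  have h4 : Fintype.card {p : Sym (Fin 8) k // (3 : Fin 8) ∈ p ∧ (4 : Fin 8) ∈ p}
      = dcount k := rfl
  rw [card_sym_fin8] at h2 h3
  rw [h1, h2, h4]
  omega

lemma dcount_zero : dcount 0 = 0 := by
  rw [dcount, Fintype.card_eq_zero_iff]
  refine ⟨fun x => ?_⟩
  obtain ⟨p, h3, _⟩ := x
  have h3' : (3 : Fin 8) ∈ p.1 := h3
  have hp : p.1 = 0 := Multiset.card_eq_zero.1 p.2
  rw [hp] at h3'
  exact absurd h3' (Multiset.notMem_zero _)

lemma dcount_one : dcount 1 = 0 := by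
  rw [dcount, Fintype.card_eq_zero_iff]
  refine ⟨fun x => ?_⟩
  obtain ⟨p, h3, h4⟩ := x
  have h3' : (3 : Fin 8) ∈ p.1 := h3
  have h4' : (4 : Fin 8) ∈ p.1 := h4
  obtain ⟨a, hp⟩ := Multiset.card_eq_one.1 p.2
  rw [hp, Multiset.mem_singleton] at h3' h4'
  exact absurd (h3' ▸ h4') (by decide)

lemma dcount_two (k : ℕ) : dcount (k + 2) = (k + 7).choose 7 := by
  rw [dcount, Fintype.card_congr (eraseEquiv k), card_sym_fin8]

/-- The number of multichains of length `k` in the interval `[(0),(5)]` of `E`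
equals the coefficient of `t^k` in `(1−t²)/(1−t)^8 = (1+t)/(1−t)^7`. -/
theorem spinE_interval_e0_e5_multichains :
    (PowerSeries.mk fun k => (quadricMultichainCount k : ℚ)) * (1 - PowerSeries.X) ^ 8 =
      1 - PowerSeries.X ^ 2 := by
  have hmk : (PowerSeries.mk fun n => ((n + 7).choose 7 : ℚ))
      = (PowerSeries.invOneSubPow ℚ 8).val := by
    rw [PowerSeries.invOneSubPow_val_eq_mk_sub_one_add_choose_of_pos ℚ (d := 8) (by norm_num)]
    ext n
    simp only [PowerSeries.coeff_mk]
    norm_num [Nat.add_comm]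
  have hF : (PowerSeries.mk fun n => ((n + 7).choose 7 : ℚ)) * (1 - PowerSeries.X) ^ 8 = 1 := by
    rw [hmk, ← PowerSeries.invOneSubPow_inv_eq_one_sub_pow]
    exact (PowerSeries.invOneSubPow ℚ 8).val_inv
  have hQ : (PowerSeries.mk fun k => (quadricMultichainCount k : ℚ))
      = (1 - PowerSeries.X ^ 2) * PowerSeries.mk fun n => ((n + 7).choose 7 : ℚ) := by
    ext n
    rw [PowerSeries.coeff_mk, sub_mul, one_mul, map_sub, PowerSeries.coeff_mk,
      PowerSeries.coeff_X_pow_mul', PowerSeries.coeff_mk]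
    split_ifs with h
    · have hmc := mc_card n
      have hd : dcount n = (n - 2 + 7).choose 7 := by
        obtain ⟨m, rfl⟩ : ∃ m, n = m + 2 := ⟨n - 2, by omega⟩
        rw [show m + 2 - 2 = m from by omega]
        exact dcount_two m
      rw [hd] at hmc
      have : (quadricMultichainCount n : ℚ) + ((n - 2 + 7).choose 7 : ℚ)
          = ((n + 7).choose 7 : ℚ) := by exact_mod_cast hmc
      linarith
    · have hmc := mc_card n
      have hd : dcount n = 0 := by
        interval_cases n
        · exact dcount_zero
        · exact dcount_one
      rw [hd, Nat.add_zero] at hmc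
      rw [sub_zero]
      exact_mod_cast congrArg (Nat.cast (R := ℚ)) hmc
  rw [hQ, mul_assoc, hF, mul_one]
end
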